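/- Let S, T ⊆ {0,1}^m be decreasing with S ⊆ T, and write S = ({0}×S₀) ∪ ({1}×S₁), T = ({0}×T₀) ∪ ({1}×T₁) for S₀,S₁,T₀,T₁ ⊆ {0,1}^{m−1}. Then d(T,S) = min(2·d(T₀,S₀), d(T₁,S₁)), where d(T,S) = min{wt(v) : v ∈ GRM(T) \ GRM(S)}. -/

import Mathlib

open Matrix

noncomputable section
open scoped Classical

/-- `R_m = [[1,1],[0,1]]^{⊗m}` over F₂. -/
def Rcube (m : ℕ) : Matrix (Fin m → Fin 2) (Fin m → Fin 2) (ZMod 2) :=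
  Matrix.of fun r c => ∏ i, (!![1, 1; 0, 1] : Matrix (Fin 2) (Fin 2) (ZMod 2)) (r i) (c i)

/-- Incomplete permutation matrix `D(U)` with one row per element `u ∈ U`. -/
def Dmat {m : ℕ} (U : Set (Fin m → Fin 2)) : Matrix U (Fin m → Fin 2) (ZMod 2) :=
  Matrix.of fun u v => if v = (u : Fin m → Fin 2) then 1 else 0

/-- `GRM(U) = RowSpan(D(U) · R_m)`. -/
def GRM {m : ℕ} (U : Set (Fin m → Fin 2)) :
    Submodule (ZMod 2) ((Fin m → Fin 2) → ZMod 2) :=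
  Submodule.span (ZMod 2) (Set.range (Dmat U * Rcube m))

/-- Hamming weight of a codeword. -/
def wtc {m : ℕ} (v : (Fin m → Fin 2) → ZMod 2) : ℕ :=
  (Finset.univ.filter fun x : Fin m → Fin 2 => v x ≠ 0).card

/-- `d(T,S) = min{wt v : v ∈ GRM(T) \ GRM(S)}` (in `ℕ∞`, with `sInf ∅ = ⊤`). -/
def dGRM {m : ℕ} (T S : Set (Fin m → Fin 2)) : ℕ∞ :=
  sInf {k : ℕ∞ | ∃ v, v ∈ GRM T ∧ v ∉ GRM S ∧ (wtc v : ℕ∞) = k}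


-- ========== auxiliary lemmas ==========

lemma Rcube_cons {m : ℕ} (i j : Fin 2) (u x : Fin m → Fin 2) :
    Rcube (m + 1) (Fin.cons i u) (Fin.cons j x)
      = (!![1, 1; 0, 1] : Matrix (Fin 2) (Fin 2) (ZMod 2)) i j * Rcube m u x := by
  simp [Rcube, Fin.prod_univ_succ]

def consMap {m : ℕ} (i : Fin 2) : (Fin m → Fin 2) → (Fin (m+1) → Fin 2) :=
  fun x => Fin.cons i x

def liftA {m : ℕ} : ((Fin (m+1) → Fin 2) → ZMod 2) →ₗ[ZMod 2] ((Fin m → Fin 2) → ZMod 2) :=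
  LinearMap.funLeft (ZMod 2) (ZMod 2) (consMap 0)

def liftB {m : ℕ} : ((Fin (m+1) → Fin 2) → ZMod 2) →ₗ[ZMod 2] ((Fin m → Fin 2) → ZMod 2) :=
  LinearMap.funLeft (ZMod 2) (ZMod 2) (consMap 0) + LinearMap.funLeft (ZMod 2) (ZMod 2) (consMap 1)

@[simp] lemma liftA_apply {m : ℕ} (c : (Fin (m+1) → Fin 2) → ZMod 2) (x : Fin m → Fin 2) :
    liftA c x = c (Fin.cons 0 x) := rfl

@[simp] lemma liftB_apply {m : ℕ} (c : (Fin (m+1) → Fin 2) → ZMod 2) (x : Fin m → Fin 2) :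
    liftB c x = c (Fin.cons 0 x) + c (Fin.cons 1 x) := rfl

def emb0 {m : ℕ} : ((Fin m → Fin 2) → ZMod 2) →ₗ[ZMod 2] ((Fin (m+1) → Fin 2) → ZMod 2) :=
  LinearMap.funLeft (ZMod 2) (ZMod 2) Fin.tail

def emb1 {m : ℕ} : ((Fin m → Fin 2) → ZMod 2) →ₗ[ZMod 2] ((Fin (m+1) → Fin 2) → ZMod 2) where
  toFun v x := if x 0 = 1 then v (Fin.tail x) else 0
  map_add' v w := by funext x; by_cases h : x 0 = 1 <;> simp [h]
  map_smul' r v := by funext x; by_cases h : x 0 = 1 <;> simp [h]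

@[simp] lemma emb0_apply {m : ℕ} (v : (Fin m → Fin 2) → ZMod 2) (x : Fin (m+1) → Fin 2) :
    emb0 v x = v (Fin.tail x) := rfl

@[simp] lemma emb1_apply {m : ℕ} (v : (Fin m → Fin 2) → ZMod 2) (x : Fin (m+1) → Fin 2) :
    emb1 v x = if x 0 = 1 then v (Fin.tail x) else 0 := rfl

lemma M2_top : ∀ j : Fin 2, (!![1, 1; 0, 1] : Matrix (Fin 2) (Fin 2) (ZMod 2)) 0 j = 1 := by decide
lemma M2_bot : ∀ j : Fin 2, (!![1, 1; 0, 1] : Matrix (Fin 2) (Fin 2) (ZMod 2)) 1 j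
    = if j = 1 then 1 else 0 := by decide

lemma emb0_row {m : ℕ} (u : Fin m → Fin 2) :
    emb0 (Rcube m u) = Rcube (m+1) (Fin.cons 0 u) := by
  funext x
  have hx : x = Fin.cons (x 0) (Fin.tail x) := (Fin.cons_self_tail x).symm
  rw [emb0_apply]
  conv_rhs => rw [hx]
  rw [Rcube_cons, M2_top, one_mul]

lemma emb1_row {m : ℕ} (u : Fin m → Fin 2) :
    emb1 (Rcube m u) = Rcube (m+1) (Fin.cons 1 u) := by
  funext x
  have hx : x = Fin.cons (x 0) (Fin.tail x) := (Fin.cons_self_tail x).symm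
  rw [emb1_apply]
  conv_rhs => rw [hx]
  rw [Rcube_cons, M2_bot]
  by_cases h : x 0 = 1 <;> simp [h]

lemma liftA_row0 {m : ℕ} (u : Fin m → Fin 2) :
    liftA (Rcube (m+1) (Fin.cons 0 u)) = Rcube m u := by
  funext x; rw [liftA_apply, Rcube_cons]; simp [M2_top]

lemma liftA_row1 {m : ℕ} (u : Fin m → Fin 2) :
    liftA (Rcube (m+1) (Fin.cons 1 u)) = 0 := by
  funext x; rw [liftA_apply, Rcube_cons]; simp [M2_bot]

lemma liftB_row0 {m : ℕ} (u : Fin m → Fin 2) :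
    liftB (Rcube (m+1) (Fin.cons 0 u)) = 0 := by
  funext x
  rw [liftB_apply, Rcube_cons, Rcube_cons, M2_top, M2_top]
  simp [CharTwo.add_self_eq_zero]

lemma liftB_row1 {m : ℕ} (u : Fin m → Fin 2) :
    liftB (Rcube (m+1) (Fin.cons 1 u)) = Rcube m u := by
  funext x
  rw [liftB_apply, Rcube_cons, Rcube_cons, M2_bot, M2_bot]
  simp

lemma decomp {m : ℕ} (c : (Fin (m+1) → Fin 2) → ZMod 2) :
    c = emb0 (liftA c) + emb1 (liftB c) := by
  funext x
  have hx : x = Fin.cons (x 0) (Fin.tail x) := (Fin.cons_self_tail x).symm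
  simp only [Pi.add_apply, emb0_apply, emb1_apply, liftA_apply, liftB_apply]
  by_cases h : x 0 = 1
  · conv_lhs => rw [hx, h]
    rw [if_pos h, ← add_assoc, CharTwo.add_self_eq_zero, zero_add]
  · have h0 : x 0 = 0 := by omega
    conv_lhs => rw [hx, h0]
    simp [h]

lemma row_eq {m : ℕ} (U : Set (Fin m → Fin 2)) (u : U) :
    (Dmat U * Rcube m) u = Rcube m (u : Fin m → Fin 2) := by
  funext x
  simp [Dmat, Matrix.mul_apply]

lemma GRM_eq {m : ℕ} (U : Set (Fin m → Fin 2)) :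
    GRM U = Submodule.span (ZMod 2) (Rcube m '' U) := by
  unfold GRM
  congr 1
  rw [show ((Dmat U * Rcube m) : Matrix U _ _) = fun u : U => Rcube m ↑u from funext (row_eq U)]
  ext v; simp [Set.range, Set.image]

lemma GRM_mono {m : ℕ} {U V : Set (Fin m → Fin 2)} (h : U ⊆ V) : GRM U ≤ GRM V := by
  rw [GRM_eq, GRM_eq]
  exact Submodule.span_mono (Set.image_mono h)

lemma mem_GRM_iff {m : ℕ} (U : Set (Fin (m+1) → Fin 2)) (c : (Fin (m+1) → Fin 2) → ZMod 2) :
    c ∈ GRM U ↔ liftA c ∈ GRM {u | Fin.cons 0 u ∈ U} ∧ liftB c ∈ GRM {u | Fin.cons 1 u ∈ U} := by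
  constructor
  · intro hc
    have key : GRM U ≤ (GRM {u | Fin.cons 0 u ∈ U}).comap liftA ⊓
        (GRM {u | Fin.cons 1 u ∈ U}).comap liftB := by
      rw [GRM_eq U, Submodule.span_le]
      rintro v ⟨w, hw, rfl⟩
      simp only [SetLike.mem_coe, Submodule.mem_inf, Submodule.mem_comap]
      have hw' : w = Fin.cons (w 0) (Fin.tail w) := (Fin.cons_self_tail w).symm
      have h2 : w 0 = 0 ∨ w 0 = 1 := by omega
      rcases h2 with h2 | h2
      · have hwU : Fin.tail w ∈ {u | Fin.cons 0 u ∈ U} := by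
          simp only [Set.mem_setOf_eq]; rw [← h2, ← hw']; exact hw
        rw [hw', h2]
        constructor
        · rw [liftA_row0, GRM_eq]
          exact Submodule.subset_span ⟨_, hwU, rfl⟩
        · rw [liftB_row0]
          exact Submodule.zero_mem _
      · have hwU : Fin.tail w ∈ {u | Fin.cons 1 u ∈ U} := by
          simp only [Set.mem_setOf_eq]; rw [← h2, ← hw']; exact hw
        rw [hw', h2]
        constructor
        · rw [liftA_row1]
          exact Submodule.zero_mem _
        · rw [liftB_row1, GRM_eq]
          exact Submodule.subset_span ⟨_, hwU, rfl⟩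
    exact (key hc : _).imp id id
  · rintro ⟨h0, h1⟩
    have e0 : (GRM {u | Fin.cons 0 u ∈ U}).map emb0 ≤ GRM U := by
      rw [GRM_eq, GRM_eq, Submodule.map_span]
      apply Submodule.span_mono
      rintro v ⟨_, ⟨u, hu, rfl⟩, rfl⟩
      exact ⟨Fin.cons 0 u, hu, (emb0_row u).symm⟩
    have e1 : (GRM {u | Fin.cons 1 u ∈ U}).map emb1 ≤ GRM U := by
      rw [GRM_eq, GRM_eq, Submodule.map_span]
      apply Submodule.span_mono
      rintro v ⟨_, ⟨u, hu, rfl⟩, rfl⟩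
      exact ⟨Fin.cons 1 u, hu, (emb1_row u).symm⟩
    rw [decomp c]
    exact Submodule.add_mem _ (e0 ⟨_, h0, rfl⟩) (e1 ⟨_, h1, rfl⟩)

def splitEquiv (m : ℕ) : (Fin 2 × (Fin m → Fin 2)) ≃ (Fin (m+1) → Fin 2) where
  toFun p := Fin.cons p.1 p.2
  invFun x := (x 0, Fin.tail x)
  left_inv p := by simp
  right_inv x := Fin.cons_self_tail x

lemma wtc_split {m : ℕ} (c : (Fin (m+1) → Fin 2) → ZMod 2) :
    wtc c = wtc (fun x => c (Fin.cons 0 x)) + wtc (fun x => c (Fin.cons 1 x)) := by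
  classical
  unfold wtc
  rw [Finset.card_filter, Finset.card_filter, Finset.card_filter]
  rw [← Fintype.sum_equiv (splitEquiv m) (fun p => if c (splitEquiv m p) ≠ 0 then 1 else 0)
      (fun x => if c x ≠ 0 then 1 else 0) (fun p => rfl)]
  rw [Fintype.sum_prod_type, Fin.sum_univ_two]
  rfl

lemma wtc_add_le {m : ℕ} (a b : (Fin m → Fin 2) → ZMod 2) :
    wtc (a + b) ≤ wtc a + wtc b := by
  classical
  unfold wtc
  refine le_trans (Finset.card_le_card ?_) (Finset.card_union_le _ _)
  intro x hx
  simp only [Finset.mem_filter, Finset.mem_union, Finset.mem_univ, true_and, Pi.add_apply] at *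
  by_contra h
  push_neg at h
  exact hx (by rw [h.1, h.2]; ring)

lemma wtc_zero {m : ℕ} : wtc (0 : (Fin m → Fin 2) → ZMod 2) = 0 := by
  simp [wtc]

lemma dGRM_le {m : ℕ} {T S : Set (Fin m → Fin 2)} {v : (Fin m → Fin 2) → ZMod 2}
    (h1 : v ∈ GRM T) (h2 : v ∉ GRM S) : dGRM T S ≤ (wtc v : ℕ∞) :=
  sInf_le ⟨v, h1, h2, rfl⟩

lemma dGRM_attained {m : ℕ} {T S : Set (Fin m → Fin 2)}
    (h : ∃ v, v ∈ GRM T ∧ v ∉ GRM S) :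
    ∃ v, v ∈ GRM T ∧ v ∉ GRM S ∧ dGRM T S = (wtc v : ℕ∞) := by
  obtain ⟨v, h1, h2⟩ := h
  have hne : {k : ℕ∞ | ∃ v, v ∈ GRM T ∧ v ∉ GRM S ∧ (wtc v : ℕ∞) = k}.Nonempty :=
    ⟨_, v, h1, h2, rfl⟩
  obtain ⟨w, hw1, hw2, hw3⟩ := csInf_mem hne
  exact ⟨w, hw1, hw2, hw3.symm⟩

/-- For decreasing `S ⊆ T ⊆ {0,1}^{m+1}` split along the first coordinate as
`S = ({0}×S₀) ∪ ({1}×S₁)` and `T = ({0}×T₀) ∪ ({1}×T₁)`, one has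
`d(T,S) = min(2·d(T₀,S₀), d(T₁,S₁))`. -/
theorem GRM_nested_distance_uuv {m : ℕ} (S T : Set (Fin (m + 1) → Fin 2))
    (hS : IsLowerSet S) (hT : IsLowerSet T) (hST : S ⊆ T)
    (S₀ S₁ T₀ T₁ : Set (Fin m → Fin 2))
    (hS₀ : S₀ = {s | Fin.cons 0 s ∈ S}) (hS₁ : S₁ = {s | Fin.cons 1 s ∈ S})
    (hT₀ : T₀ = {t | Fin.cons 0 t ∈ T}) (hT₁ : T₁ = {t | Fin.cons 1 t ∈ T})
    (hne : ∃ v, v ∈ GRM T ∧ v ∉ GRM S)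
    (hne₀ : ∃ v, v ∈ GRM T₀ ∧ v ∉ GRM S₀)
    (hne₁ : ∃ v, v ∈ GRM T₁ ∧ v ∉ GRM S₁) :
    dGRM T S = min (2 * dGRM T₀ S₀) (dGRM T₁ S₁) := by
  subst hS₀ hS₁ hT₀ hT₁
  -- decreasingness: the "1" slice is contained in the "0" slice
  have hcons_le : ∀ s : Fin m → Fin 2, (Fin.cons 0 s : Fin (m+1) → Fin 2) ≤ Fin.cons 1 s := by
    intro s i
    refine Fin.cases ?_ ?_ i
    · simp [Fin.le_def]
    · intro j; simp
  have hS10 : {s | Fin.cons (1 : Fin 2) s ∈ S} ⊆ {s | Fin.cons (0 : Fin 2) s ∈ S} :=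
    fun s hs => hS (hcons_le s) hs
  have hT10 : {s | Fin.cons (1 : Fin 2) s ∈ T} ⊆ {s | Fin.cons (0 : Fin 2) s ∈ T} :=
    fun s hs => hT (hcons_le s) hs
  obtain ⟨a, ha1, ha2, hda⟩ := dGRM_attained hne₀
  obtain ⟨b, hb1, hb2, hdb⟩ := dGRM_attained hne₁
  refine le_antisymm (le_min ?_ ?_) ?_
  · -- dGRM T S ≤ 2 * d₀ via the codeword (a, a)
    have hA : liftA (emb0 a) = a := by funext x; simp
    have hB : liftB (emb0 a) = 0 := by
      funext x; simp [CharTwo.add_self_eq_zero]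
    have hmemT : (emb0 a : (Fin (m+1) → Fin 2) → ZMod 2) ∈ GRM T := by
      rw [mem_GRM_iff, hA, hB]
      exact ⟨ha1, Submodule.zero_mem _⟩
    have hmemS : (emb0 a : (Fin (m+1) → Fin 2) → ZMod 2) ∉ GRM S := by
      intro hc
      rw [mem_GRM_iff, hA, hB] at hc
      exact ha2 hc.1
    have hw : wtc (emb0 a : (Fin (m+1) → Fin 2) → ZMod 2) = wtc a + wtc a := by
      rw [wtc_split]
      congr 1 <;> · congr 1; funext x; simp
    calc dGRM T S ≤ (wtc (emb0 a : (Fin (m+1) → Fin 2) → ZMod 2) : ℕ∞) := dGRM_le hmemT hmemS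
    _ = 2 * (wtc a : ℕ∞) := by rw [hw]; push_cast; ring
    _ = 2 * dGRM {t | Fin.cons 0 t ∈ T} {s | Fin.cons 0 s ∈ S} := by rw [hda]
  · -- dGRM T S ≤ d₁ via the codeword (0, b)
    have hA : liftA (emb1 b) = 0 := by
      funext x
      have : (Fin.cons 0 x : Fin (m+1) → Fin 2) 0 = 0 := Fin.cons_zero _ _
      simp [this]
    have hB : liftB (emb1 b) = b := by
      funext x
      have h0 : (Fin.cons 0 x : Fin (m+1) → Fin 2) 0 = 0 := Fin.cons_zero _ _
      have h1 : (Fin.cons 1 x : Fin (m+1) → Fin 2) 0 = 1 := Fin.cons_zero _ _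
      simp [h0, h1]
    have hmemT : (emb1 b : (Fin (m+1) → Fin 2) → ZMod 2) ∈ GRM T := by
      rw [mem_GRM_iff, hA, hB]
      exact ⟨Submodule.zero_mem _, hb1⟩
    have hmemS : (emb1 b : (Fin (m+1) → Fin 2) → ZMod 2) ∉ GRM S := by
      intro hc
      rw [mem_GRM_iff, hA, hB] at hc
      exact hb2 hc.2
    have hw : wtc (emb1 b : (Fin (m+1) → Fin 2) → ZMod 2) = wtc b := by
      rw [wtc_split]
      have e0 : (fun x => (emb1 b : (Fin (m+1) → Fin 2) → ZMod 2) (Fin.cons 0 x)) = 0 := by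
        funext x
        have : (Fin.cons 0 x : Fin (m+1) → Fin 2) 0 = 0 := Fin.cons_zero _ _
        simp [this]
      have e1 : (fun x => (emb1 b : (Fin (m+1) → Fin 2) → ZMod 2) (Fin.cons 1 x)) = b := by
        funext x
        have : (Fin.cons 1 x : Fin (m+1) → Fin 2) 0 = 1 := Fin.cons_zero _ _
        simp [this]
      rw [e0, e1, wtc_zero, zero_add]
    calc dGRM T S ≤ (wtc (emb1 b : (Fin (m+1) → Fin 2) → ZMod 2) : ℕ∞) := dGRM_le hmemT hmemS
    _ = dGRM {t | Fin.cons 1 t ∈ T} {s | Fin.cons 1 s ∈ S} := by rw [hw, hdb]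
  · -- lower bound
    refine le_sInf ?_
    rintro k ⟨v, hv1, hv2, rfl⟩
    have hmem := (mem_GRM_iff T v).1 hv1
    obtain ⟨haT, hbT⟩ := hmem
    have hnot : ¬(liftA v ∈ GRM {s | Fin.cons (0:Fin 2) s ∈ S} ∧
        liftB v ∈ GRM {s | Fin.cons (1:Fin 2) s ∈ S}) := fun h => hv2 ((mem_GRM_iff S v).2 h)
    set c1 : (Fin m → Fin 2) → ZMod 2 := fun x => v (Fin.cons 1 x) with hc1
    have hBsum : liftB v = liftA v + c1 := by funext x; rfl
    have hwv : wtc v = wtc (liftA v) + wtc c1 := wtc_split v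
    by_cases hbS : liftB v ∈ GRM {s | Fin.cons (1:Fin 2) s ∈ S}
    · -- first-half argument: both a and a + b have weight ≥ d₀
      have haS : liftA v ∉ GRM {s | Fin.cons (0:Fin 2) s ∈ S} := fun h => hnot ⟨h, hbS⟩
      have hc1eq : c1 = liftA v + liftB v := by
        funext x
        rw [hBsum]
        simp only [Pi.add_apply]
        rw [← add_assoc, CharTwo.add_self_eq_zero, zero_add]
      have hc1T : c1 ∈ GRM {t | Fin.cons (0:Fin 2) t ∈ T} := by
        rw [hc1eq]
        exact Submodule.add_mem _ haT (GRM_mono hT10 hbT)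
      have hc1S : c1 ∉ GRM {s | Fin.cons (0:Fin 2) s ∈ S} := by
        intro h
        apply haS
        have : liftA v = c1 + liftB v := by
          funext x
          rw [hc1eq]
          simp only [Pi.add_apply]
          rw [add_assoc, CharTwo.add_self_eq_zero, add_zero]
        rw [this]
        exact Submodule.add_mem _ h (GRM_mono hS10 hbS)
      refine le_trans (min_le_left _ _) ?_
      have h1 : dGRM {t | Fin.cons (0:Fin 2) t ∈ T} {s | Fin.cons (0:Fin 2) s ∈ S}
          ≤ (wtc (liftA v) : ℕ∞) := dGRM_le haT haS
      have h2 : dGRM {t | Fin.cons (0:Fin 2) t ∈ T} {s | Fin.cons (0:Fin 2) s ∈ S}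
          ≤ (wtc c1 : ℕ∞) := dGRM_le hc1T hc1S
      calc 2 * dGRM {t | Fin.cons (0:Fin 2) t ∈ T} {s | Fin.cons (0:Fin 2) s ∈ S}
          = dGRM {t | Fin.cons (0:Fin 2) t ∈ T} {s | Fin.cons (0:Fin 2) s ∈ S}
            + dGRM {t | Fin.cons (0:Fin 2) t ∈ T} {s | Fin.cons (0:Fin 2) s ∈ S} := two_mul _
        _ ≤ (wtc (liftA v) : ℕ∞) + (wtc c1 : ℕ∞) := add_le_add h1 h2
        _ = (wtc v : ℕ∞) := by rw [hwv]; push_cast; ring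
    · -- second-half argument
      refine le_trans (min_le_right _ _) ?_
      have h1 : dGRM {t | Fin.cons (1:Fin 2) t ∈ T} {s | Fin.cons (1:Fin 2) s ∈ S}
          ≤ (wtc (liftB v) : ℕ∞) := dGRM_le hbT hbS
      refine le_trans h1 ?_
      have h2 : wtc (liftB v) ≤ wtc (liftA v) + wtc c1 := by
        rw [hBsum]; exact wtc_add_le _ _
      calc (wtc (liftB v) : ℕ∞) ≤ ((wtc (liftA v) + wtc c1 : ℕ) : ℕ∞) := by exact_mod_cast h2
        _ = (wtc v : ℕ∞) := by rw [hwv]
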